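/- For every t ≥ 0 and every g ∈ L²(ℝ × U, e^{−|x|} dx ⊗ λ), the function T^U_t g belongs to L²(ℝ × U, e^{−|x|} dx ⊗ λ) and ‖T^U_t g‖ ≤ K_{√t} ‖g‖, where K_s = (∫_ℝ e^{s|z|} p_1(z) dz)^{1/2} is finite. -/

import Mathlib

open MeasureTheory Real Filter Topology

open scoped ENNReal NNReal

/-- The heat kernel `p_t(x) = (2πt)^{-1/2} exp(-x²/(2t))`. -/
noncomputable def heatKernel (t x : ℝ) : ℝ :=
  (Real.sqrt (2 * Real.pi * t))⁻¹ * Real.exp (-(x ^ 2) / (2 * t))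

/-- The semigroup `T^U_t g(a,x) = ∫ p_t(x-y) g(a,y) dy` acting in the spatial variable,
with `T^U_0 g = g`. -/
noncomputable def heatOpU {U : Type*} (t : ℝ) (g : U × ℝ → ℝ) (q : U × ℝ) : ℝ :=
  if t = 0 then g q else ∫ y : ℝ, heatKernel t (q.2 - y) * g (q.1, y)

lemma heatKernel_nonneg (t x : ℝ) : 0 ≤ heatKernel t x :=
  mul_nonneg (inv_nonneg.2 (Real.sqrt_nonneg _)) (Real.exp_nonneg _)

lemma continuous_heatKernel (t : ℝ) : Continuous (heatKernel t) := by
  unfold heatKernel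
  exact continuous_const.mul ((continuous_pow 2).neg.div_const _).rexp

lemma integrable_exp_mul_heatKernel {s t : ℝ} (hs : 0 ≤ s) (ht : 0 < t) :
    Integrable (fun z : ℝ => Real.exp (s * |z|) * heatKernel t z) := by
  have h4 : (0:ℝ) < 1/(4*t) := by positivity
  refine Integrable.mono' (((integrable_exp_neg_mul_sq h4).const_mul
    ((Real.sqrt (2*Real.pi*t))⁻¹ * Real.exp (s^2*t)))) ?_ ?_
  · exact ((Real.continuous_exp.comp (continuous_const.mul continuous_abs)).mul
      (continuous_heatKernel t)).aestronglyMeasurable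
  · filter_upwards with z
    have hz : ‖Real.exp (s * |z|) * heatKernel t z‖ = Real.exp (s * |z|) * heatKernel t z :=
      norm_of_nonneg (mul_nonneg (Real.exp_nonneg _) (heatKernel_nonneg t z))
    rw [hz]
    unfold heatKernel
    have h1 : Real.exp (s*|z|) * ((Real.sqrt (2*Real.pi*t))⁻¹ * Real.exp (-(z^2)/(2*t))) =
        (Real.sqrt (2*Real.pi*t))⁻¹ * Real.exp (s*|z| + -(z^2)/(2*t)) := by
      rw [Real.exp_add]; ring
    have h2 : (Real.sqrt (2*Real.pi*t))⁻¹ * Real.exp (s^2*t) * Real.exp (-(1/(4*t))*z^2) =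
        (Real.sqrt (2*Real.pi*t))⁻¹ * Real.exp (s^2*t + -(1/(4*t))*z^2) := by
      rw [Real.exp_add]; ring
    rw [h1, h2]
    refine mul_le_mul_of_nonneg_left (Real.exp_le_exp.2 ?_) (inv_nonneg.2 (Real.sqrt_nonneg _))
    have key : s^2*t + -(1/(4*t)) * z^2 - (s * |z| + -(z ^ 2) / (2 * t)) =
        (z^2 - 4*s*t*|z| + 4*s^2*t^2) / (4*t) := by
      field_simp
      ring
    have hnum : 0 ≤ z^2 - 4*s*t*|z| + 4*s^2*t^2 := by
      nlinarith [sq_nonneg (|z| - 2*s*t), sq_abs z]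
    nlinarith [div_nonneg hnum (by linarith : (0:ℝ) ≤ 4*t)]

lemma integrable_heatKernel {t : ℝ} (ht : 0 < t) : Integrable (heatKernel t) := by
  have := integrable_exp_mul_heatKernel (le_refl (0:ℝ)) ht
  simpa using this

lemma integral_heatKernel {t : ℝ} (ht : 0 < t) : ∫ x, heatKernel t x = 1 := by
  have h : ∀ x : ℝ, heatKernel t x = (Real.sqrt (2*Real.pi*t))⁻¹ * Real.exp (-(1/(2*t)) * x^2) := by
    intro x
    unfold heatKernel
    congr 1
    rw [neg_div, neg_mul]
    congr 1
    ring
  simp_rw [h]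
  rw [integral_const_mul, integral_gaussian]
  have h2 : Real.pi / (1/(2*t)) = 2*Real.pi*t := by
    field_simp
  rw [h2, inv_mul_cancel₀]
  exact (Real.sqrt_pos.2 (by positivity)).ne'

lemma exp_abs_heatKernel_scaling {t : ℝ} (ht : 0 < t) :
    ∫ z : ℝ, Real.exp |z| * heatKernel t z
      = ∫ z : ℝ, Real.exp (Real.sqrt t * |z|) * heatKernel 1 z := by
  have hst : 0 < Real.sqrt t := Real.sqrt_pos.2 ht
  have h : ∀ z : ℝ, Real.exp (Real.sqrt t * |z|) * heatKernel 1 z =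
      Real.sqrt t • ((fun x => Real.exp |x| * heatKernel t x) (Real.sqrt t * z)) := by
    intro z
    simp only [smul_eq_mul]
    unfold heatKernel
    have habs : |Real.sqrt t * z| = Real.sqrt t * |z| := by
      rw [abs_mul, abs_of_nonneg hst.le]
    rw [habs]
    have h1 : Real.sqrt (2*Real.pi*t) = Real.sqrt (2*Real.pi) * Real.sqrt t := by
      rw [← Real.sqrt_mul (by positivity)]
    have h2 : -((Real.sqrt t * z)^2) / (2*t) = -(z^2)/(2*1) := by
      rw [mul_pow, Real.sq_sqrt ht.le]
      field_simp
    rw [h1, h2]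
    have h3 : Real.sqrt (2*Real.pi*1) = Real.sqrt (2*Real.pi) := by norm_num
    rw [h3, mul_inv]
    field_simp
  rw [show (∫ z : ℝ, Real.exp (Real.sqrt t * |z|) * heatKernel 1 z)
      = ∫ z : ℝ, Real.sqrt t • ((fun x => Real.exp |x| * heatKernel t x) (Real.sqrt t * z)) from by
    simp_rw [h]]
  rw [integral_smul, Measure.integral_comp_mul_left (fun x => Real.exp |x| * heatKernel t x) (Real.sqrt t),
    smul_smul, abs_of_nonneg (inv_nonneg.2 hst.le), mul_inv_cancel₀ hst.ne', one_smul]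

lemma heatKernel_pos {t : ℝ} (ht : 0 < t) (x : ℝ) : 0 < heatKernel t x :=
  mul_pos (inv_pos.2 (Real.sqrt_pos.2 (by positivity))) (Real.exp_pos _)

/-- For every `t ≥ 0` and every `g ∈ L²(ℝ × U, e^{-|x|}dx ⊗ λ)`, the function `T^U_t g`
belongs to `L²(ℝ × U, e^{-|x|}dx ⊗ λ)` and `‖T^U_t g‖ ≤ K_{√t} ‖g‖`, where
`K_s = (∫ e^{s|z|} p_1(z) dz)^{1/2}` is finite. -/
theorem heatOpU_bounded {U : Type*} [MeasurableSpace U] (lam : Measure U) [SigmaFinite lam]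
    (t : ℝ) (ht : 0 ≤ t) (g : U × ℝ → ℝ) (hg : Measurable g)
    (hg2 : Integrable (fun q : U × ℝ => g q ^ 2 * Real.exp (-|q.2|)) (lam.prod volume)) :
    Integrable (fun z : ℝ => Real.exp (Real.sqrt t * |z|) * heatKernel 1 z) ∧
    Integrable (fun q : U × ℝ => heatOpU t g q ^ 2 * Real.exp (-|q.2|)) (lam.prod volume) ∧
    Real.sqrt (∫ q : U × ℝ, heatOpU t g q ^ 2 * Real.exp (-|q.2|) ∂(lam.prod volume)) ≤
      Real.sqrt (∫ z : ℝ, Real.exp (Real.sqrt t * |z|) * heatKernel 1 z) *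
        Real.sqrt (∫ q : U × ℝ, g q ^ 2 * Real.exp (-|q.2|) ∂(lam.prod volume)) := by
  have hK2int : Integrable (fun z : ℝ => Real.exp (Real.sqrt t * |z|) * heatKernel 1 z) :=
    integrable_exp_mul_heatKernel (Real.sqrt_nonneg t) one_pos
  rcases eq_or_lt_of_le ht with h0 | htpos
  · -- case t = 0
    have h0' : t = 0 := h0.symm
    subst h0'
    refine ⟨hK2int, by simpa [heatOpU] using hg2, ?_⟩
    have hint1 : (∫ z : ℝ, Real.exp (Real.sqrt 0 * |z|) * heatKernel 1 z) = 1 := by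
      simp only [Real.sqrt_zero, zero_mul, Real.exp_zero, one_mul]
      exact integral_heatKernel one_pos
    rw [hint1, Real.sqrt_one, one_mul]
    have : (fun q : U × ℝ => heatOpU 0 g q ^ 2 * Real.exp (-|q.2|)) =
        fun q : U × ℝ => g q ^ 2 * Real.exp (-|q.2|) := by
      funext q; simp [heatOpU]
    rw [this]
  · -- case 0 < t
    have htne : t ≠ 0 := htpos.ne'
    set μ : Measure (U × ℝ) := lam.prod volume with hμ
    set K2 : ℝ := ∫ z : ℝ, Real.exp (Real.sqrt t * |z|) * heatKernel 1 z with hK2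
    have hK2nn : 0 ≤ K2 :=
      integral_nonneg fun z => mul_nonneg (Real.exp_nonneg _) (heatKernel_nonneg _ _)
    set B : ℝ := ∫ q : U × ℝ, g q ^ 2 * Real.exp (-|q.2|) ∂μ with hB
    have hBnn : 0 ≤ B :=
      integral_nonneg fun q => mul_nonneg (sq_nonneg _) (Real.exp_nonneg _)
    -- measurability
    have hker : Measurable fun p : (U × ℝ) × ℝ => heatKernel t (p.1.2 - p.2) * g (p.1.1, p.2) :=
      ((continuous_heatKernel t).measurable.comp
        ((measurable_snd.comp measurable_fst).sub measurable_snd)).mul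
        (hg.comp ((measurable_fst.comp measurable_fst).prodMk measurable_snd))
    have hTeq : heatOpU t g = fun q : U × ℝ => ∫ y : ℝ, heatKernel t (q.2 - y) * g (q.1, y) := by
      funext q; simp [heatOpU, htne]
    have hTm : StronglyMeasurable (heatOpU t g) := by
      rw [hTeq]
      exact hker.stronglyMeasurable.integral_prod_right'
    have hPmeas : Measurable fun z : ℝ => ENNReal.ofReal (heatKernel t z) :=
      ENNReal.measurable_ofReal.comp (continuous_heatKernel t).measurable
    -- pointwise Cauchy-Schwarz
    have hCS : ∀ q : U × ℝ, ((‖heatOpU t g q‖₊ : ℝ≥0∞)) ^ 2 ≤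
        ∫⁻ y : ℝ, ENNReal.ofReal (heatKernel t (q.2 - y)) * ((‖g (q.1, y)‖₊ : ℝ≥0∞)) ^ 2 := by
      intro q
      set P : ℝ → ℝ≥0∞ := fun z => ENNReal.ofReal (heatKernel t z) with hP
      have hPm : Measurable fun y : ℝ => P (q.2 - y) :=
        hPmeas.comp (measurable_const.sub measurable_id)
      have hNm : Measurable fun y : ℝ => ((‖g (q.1, y)‖₊ : ℝ≥0∞)) :=
        (hg.comp (measurable_const.prodMk measurable_id)).nnnorm.coe_nnreal_ennreal
      have h0 : ((‖heatOpU t g q‖₊ : ℝ≥0∞)) ≤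
          ∫⁻ y : ℝ, P (q.2 - y) * (‖g (q.1, y)‖₊ : ℝ≥0∞) := by
        rw [hTeq]
        refine (enorm_integral_le_lintegral_enorm _).trans_eq ?_
        refine lintegral_congr fun y => ?_
        rw [enorm_mul, Real.enorm_eq_ofReal (heatKernel_nonneg _ _)]
        rfl
      have hnorm : (∫⁻ y : ℝ, P (q.2 - y)) = 1 := by
        have hmap : Measure.map (fun y : ℝ => q.2 - y) volume = volume :=
          Measure.map_sub_left_eq_self volume q.2
        have h1 : (∫⁻ y : ℝ, P (q.2 - y)) = ∫⁻ z : ℝ, P z := by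
          conv_rhs => rw [← hmap]
          rw [lintegral_map hPmeas (show Measurable fun y : ℝ => q.2 - y by fun_prop)]
        rw [h1, hP, ← ofReal_integral_eq_lintegral_ofReal (integrable_heatKernel htpos)
          (Filter.Eventually.of_forall fun x => heatKernel_nonneg t x),
          integral_heatKernel htpos, ENNReal.ofReal_one]
      have hconj : Real.HolderConjugate 2 2 := ⟨by norm_num, by norm_num, by norm_num⟩
      have hH := ENNReal.lintegral_mul_le_Lp_mul_Lq volume hconj
        (f := fun y : ℝ => (P (q.2 - y)) ^ (1/2 : ℝ))
        (g := fun y : ℝ => (P (q.2 - y)) ^ (1/2 : ℝ) * (‖g (q.1, y)‖₊ : ℝ≥0∞))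
        (hPm.pow_const _).aemeasurable ((hPm.pow_const _).mul hNm).aemeasurable
      have hfg : ∀ y : ℝ, ((fun y : ℝ => (P (q.2 - y)) ^ (1/2 : ℝ)) *
          fun y : ℝ => (P (q.2 - y)) ^ (1/2 : ℝ) * (‖g (q.1, y)‖₊ : ℝ≥0∞)) y =
          P (q.2 - y) * (‖g (q.1, y)‖₊ : ℝ≥0∞) := by
        intro y
        simp only [Pi.mul_apply]
        rw [← mul_assoc, ← ENNReal.rpow_add_of_nonneg _ _ (by norm_num) (by norm_num)]
        norm_num
      have hf2 : ∀ y : ℝ, ((P (q.2 - y)) ^ (1/2 : ℝ)) ^ (2 : ℝ) = P (q.2 - y) := by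
        intro y
        rw [← ENNReal.rpow_mul]
        norm_num
      have hg2' : ∀ y : ℝ, ((P (q.2 - y)) ^ (1/2 : ℝ) * (‖g (q.1, y)‖₊ : ℝ≥0∞)) ^ (2 : ℝ) =
          P (q.2 - y) * ((‖g (q.1, y)‖₊ : ℝ≥0∞)) ^ 2 := by
        intro y
        rw [ENNReal.mul_rpow_of_nonneg _ _ (by norm_num : (0:ℝ) ≤ 2), ← ENNReal.rpow_mul,
          show (2:ℝ) = ((2:ℕ):ℝ) from by norm_num, ENNReal.rpow_natCast]
        norm_num
      simp only [hfg, hf2, hg2'] at hH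
      rw [hnorm, ENNReal.one_rpow, one_mul] at hH
      have hfinal : ((‖heatOpU t g q‖₊ : ℝ≥0∞)) ≤
          (∫⁻ y : ℝ, P (q.2 - y) * ((‖g (q.1, y)‖₊ : ℝ≥0∞)) ^ 2) ^ (1/2 : ℝ) := h0.trans hH
      calc ((‖heatOpU t g q‖₊ : ℝ≥0∞)) ^ 2
          ≤ ((∫⁻ y : ℝ, P (q.2 - y) * ((‖g (q.1, y)‖₊ : ℝ≥0∞)) ^ 2) ^ (1/2 : ℝ)) ^ 2 := by
            exact pow_le_pow_left' hfinal 2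
        _ = ∫⁻ y : ℝ, P (q.2 - y) * ((‖g (q.1, y)‖₊ : ℝ≥0∞)) ^ 2 := by
            rw [show ((∫⁻ y : ℝ, P (q.2 - y) * ((‖g (q.1, y)‖₊ : ℝ≥0∞)) ^ 2) ^ (1/2 : ℝ)) ^ 2
              = ((∫⁻ y : ℝ, P (q.2 - y) * ((‖g (q.1, y)‖₊ : ℝ≥0∞)) ^ 2) ^ (1/2 : ℝ)) ^ ((2:ℕ):ℝ)
              from by rw [ENNReal.rpow_natCast], ← ENNReal.rpow_mul]
            norm_num
        -- exponential weight comparison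
    have hE : ∀ x y : ℝ, ENNReal.ofReal (Real.exp (-|x|)) ≤
        ENNReal.ofReal (Real.exp |x - y|) * ENNReal.ofReal (Real.exp (-|y|)) := by
      intro x y
      rw [← ENNReal.ofReal_mul (Real.exp_nonneg _), ← Real.exp_add]
      refine ENNReal.ofReal_le_ofReal (Real.exp_le_exp.2 ?_)
      have h1 := abs_sub_abs_le_abs_sub y x
      have h2 : |y - x| = |x - y| := abs_sub_comm y x
      linarith
    set Q : ℝ → ℝ≥0∞ :=
      fun z => ENNReal.ofReal (heatKernel t z) * ENNReal.ofReal (Real.exp |z|) with hQ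
    have hQm : Measurable Q :=
      hPmeas.mul (ENNReal.measurable_ofReal.comp (measurable_id.abs.exp))
    set R : U × ℝ → ℝ≥0∞ :=
      fun q => ((‖g q‖₊ : ℝ≥0∞)) ^ 2 * ENNReal.ofReal (Real.exp (-|q.2|)) with hR
    have hRm : Measurable R :=
      (hg.nnnorm.coe_nnreal_ennreal.pow_const 2).mul (ENNReal.measurable_ofReal.comp measurable_snd.abs.neg.exp)
    have hRtop : ∀ q : U × ℝ, R q ≠ ⊤ := fun q =>
      ENNReal.mul_ne_top (ENNReal.pow_ne_top ENNReal.coe_ne_top) ENNReal.ofReal_ne_top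
    set A : ℝ≥0∞ :=
      ∫⁻ q : U × ℝ, ((‖heatOpU t g q‖₊ : ℝ≥0∞)) ^ 2 * ENNReal.ofReal (Real.exp (-|q.2|)) ∂μ with hA
    have hstep1 : A ≤ ∫⁻ q : U × ℝ, (∫⁻ y : ℝ, Q (q.2 - y) * R (q.1, y)) ∂μ := by
      refine lintegral_mono fun q => ?_
      calc ((‖heatOpU t g q‖₊ : ℝ≥0∞)) ^ 2 * ENNReal.ofReal (Real.exp (-|q.2|))
          ≤ (∫⁻ y : ℝ, ENNReal.ofReal (heatKernel t (q.2 - y)) * ((‖g (q.1, y)‖₊ : ℝ≥0∞)) ^ 2) *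
            ENNReal.ofReal (Real.exp (-|q.2|)) := mul_le_mul_left (hCS q) _
        _ = ∫⁻ y : ℝ, ENNReal.ofReal (heatKernel t (q.2 - y)) * ((‖g (q.1, y)‖₊ : ℝ≥0∞)) ^ 2 *
            ENNReal.ofReal (Real.exp (-|q.2|)) :=
            (lintegral_mul_const' _ _ ENNReal.ofReal_ne_top).symm
        _ ≤ ∫⁻ y : ℝ, Q (q.2 - y) * R (q.1, y) := by
            refine lintegral_mono fun y => ?_
            calc ENNReal.ofReal (heatKernel t (q.2 - y)) * ((‖g (q.1, y)‖₊ : ℝ≥0∞)) ^ 2 *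
                ENNReal.ofReal (Real.exp (-|q.2|))
                ≤ ENNReal.ofReal (heatKernel t (q.2 - y)) * ((‖g (q.1, y)‖₊ : ℝ≥0∞)) ^ 2 *
                  (ENNReal.ofReal (Real.exp |q.2 - y|) * ENNReal.ofReal (Real.exp (-|y|))) :=
                  mul_le_mul_right (hE q.2 y) _
              _ = Q (q.2 - y) * R (q.1, y) := by simp only [hQ, hR]; ring
    have hbig : Measurable fun p : (U × ℝ) × ℝ => Q (p.1.2 - p.2) * R (p.1.1, p.2) :=
      (hQm.comp ((measurable_snd.comp measurable_fst).sub measurable_snd)).mul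
        (hRm.comp ((measurable_fst.comp measurable_fst).prodMk measurable_snd))
    have hM : (∫⁻ z : ℝ, Q z) = ENNReal.ofReal K2 := by
      have h1 : ∀ z : ℝ, Q z = ENNReal.ofReal (Real.exp |z| * heatKernel t z) := by
        intro z
        simp only [hQ]
        rw [← ENNReal.ofReal_mul (heatKernel_nonneg _ _), mul_comm]
      have hintt : Integrable (fun z : ℝ => Real.exp |z| * heatKernel t z) := by
        simpa using integrable_exp_mul_heatKernel zero_le_one htpos
      simp_rw [h1]
      rw [← ofReal_integral_eq_lintegral_ofReal hintt (Filter.Eventually.of_forall fun z =>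
        mul_nonneg (Real.exp_nonneg _) (heatKernel_nonneg _ _)),
        exp_abs_heatKernel_scaling htpos]
    have hstep2 : (∫⁻ q : U × ℝ, (∫⁻ y : ℝ, Q (q.2 - y) * R (q.1, y)) ∂μ) =
        ENNReal.ofReal K2 * ∫⁻ q : U × ℝ, R q ∂μ := by
      rw [hμ, lintegral_prod _ hbig.lintegral_prod_right'.aemeasurable]
      have inner : ∀ a : U, (∫⁻ x : ℝ, ∫⁻ y : ℝ, Q (x - y) * R (a, y)) =
          ENNReal.ofReal K2 * ∫⁻ y : ℝ, R (a, y) := by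
        intro a
        rw [lintegral_lintegral_swap (((hQm.comp (measurable_fst.sub measurable_snd)).mul
          (hRm.comp (measurable_const.prodMk measurable_snd))).aemeasurable)]
        have h2 : ∀ y : ℝ, (∫⁻ x : ℝ, Q (x - y) * R (a, y)) = ENNReal.ofReal K2 * R (a, y) := by
          intro y
          rw [lintegral_mul_const' _ _ (hRtop _), lintegral_sub_right_eq_self Q y, hM]
        simp_rw [h2]
        rw [lintegral_const_mul' _ _ ENNReal.ofReal_ne_top]
      simp_rw [inner]
      rw [lintegral_const_mul' _ _ ENNReal.ofReal_ne_top,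
        ← lintegral_prod _ hRm.aemeasurable]
    have hRB : (∫⁻ q : U × ℝ, R q ∂μ) = ENNReal.ofReal B := by
      have h1 : ∀ q : U × ℝ, R q = ENNReal.ofReal (g q ^ 2 * Real.exp (-|q.2|)) := by
        intro q
        simp only [hR]
        rw [ENNReal.ofReal_mul (sq_nonneg _)]
        congr 1
        rw [show ENNReal.ofReal (g q ^ 2) = ((‖g q ^ 2‖₊ : ℝ≥0∞)) from
          (Real.enorm_eq_ofReal (sq_nonneg _)).symm, nnnorm_pow, ENNReal.coe_pow]
      simp_rw [h1]
      rw [← ofReal_integral_eq_lintegral_ofReal hg2 (Filter.Eventually.of_forall fun q =>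
        mul_nonneg (sq_nonneg _) (Real.exp_nonneg _)), hB]
    have hAle : A ≤ ENNReal.ofReal (K2 * B) := by
      calc A ≤ _ := hstep1
        _ = ENNReal.ofReal K2 * ENNReal.ofReal B := by rw [hstep2, hRB]
        _ = ENNReal.ofReal (K2 * B) := (ENNReal.ofReal_mul hK2nn).symm
    have hfm : Measurable fun q : U × ℝ => heatOpU t g q ^ 2 * Real.exp (-|q.2|) :=
      (hTm.measurable.pow_const 2).mul measurable_snd.abs.neg.exp
    have hfnn : ∀ q : U × ℝ, 0 ≤ heatOpU t g q ^ 2 * Real.exp (-|q.2|) := fun q =>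
      mul_nonneg (sq_nonneg _) (Real.exp_nonneg _)
    have hAeq : (∫⁻ q : U × ℝ, ENNReal.ofReal (heatOpU t g q ^ 2 * Real.exp (-|q.2|)) ∂μ) = A := by
      rw [hA]
      refine lintegral_congr fun q => ?_
      rw [ENNReal.ofReal_mul (sq_nonneg _)]
      congr 1
      rw [show ENNReal.ofReal (heatOpU t g q ^ 2) = ((‖heatOpU t g q ^ 2‖₊ : ℝ≥0∞)) from
        (Real.enorm_eq_ofReal (sq_nonneg _)).symm, nnnorm_pow, ENNReal.coe_pow]
    have hint2 : Integrable (fun q : U × ℝ => heatOpU t g q ^ 2 * Real.exp (-|q.2|)) μ := by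
      refine ⟨hfm.aestronglyMeasurable, ?_⟩
      have heq : (∫⁻ q : U × ℝ, (‖heatOpU t g q ^ 2 * Real.exp (-|q.2|)‖₊ : ℝ≥0∞) ∂μ) = A := by
        rw [← hAeq]
        exact lintegral_congr fun q => Real.enorm_eq_ofReal (hfnn q)
      show (∫⁻ q : U × ℝ, (‖heatOpU t g q ^ 2 * Real.exp (-|q.2|)‖₊ : ℝ≥0∞) ∂μ) < ⊤
      rw [heq]
      exact lt_of_le_of_lt hAle ENNReal.ofReal_lt_top
    refine ⟨hK2int, hint2, ?_⟩
    have hle : (∫ q : U × ℝ, heatOpU t g q ^ 2 * Real.exp (-|q.2|) ∂μ) ≤ K2 * B := by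
      rw [integral_eq_lintegral_of_nonneg_ae (Filter.Eventually.of_forall hfnn)
        hfm.aestronglyMeasurable, hAeq]
      calc A.toReal ≤ (ENNReal.ofReal (K2 * B)).toReal :=
            ENNReal.toReal_mono ENNReal.ofReal_ne_top hAle
        _ = K2 * B := ENNReal.toReal_ofReal (mul_nonneg hK2nn hBnn)
    calc Real.sqrt (∫ q : U × ℝ, heatOpU t g q ^ 2 * Real.exp (-|q.2|) ∂μ)
        ≤ Real.sqrt (K2 * B) := Real.sqrt_le_sqrt hle
      _ = Real.sqrt K2 * Real.sqrt B := Real.sqrt_mul hK2nn B
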